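/- For every prime p, the arithmetic graph B_{p−1} (on ℕ⁺, with a ~ b iff max(a,b)/gcd(a,b) ≤ p−1) has a proper vertex coloring with p−1 colors; hence χ(B_{p−1}) = p−1. -/

import Mathlib

open Finset

/-- The arithmetic graph `B_k` on the positive integers: `a ∼ b` iff `a ≠ b` and both
`a/gcd(a,b) ≤ k` and `b/gcd(a,b) ≤ k`. -/
def arithGraph (k : ℕ) : SimpleGraph ℕ+ where
  Adj a b := a ≠ b ∧ (a : ℕ) / Nat.gcd a b ≤ k ∧ (b : ℕ) / Nat.gcd a b ≤ k
  symm := by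
    constructor
    rintro a b ⟨h1, h2, h3⟩
    exact ⟨h1.symm, by rwa [Nat.gcd_comm], by rwa [Nat.gcd_comm]⟩
  loopless := by constructor; rintro a ⟨h, -⟩; exact h rfl

lemma arith_key (p : ℕ) (hp : p.Prime) (a b : ℕ+) (hab : a ≠ b)
    (ha : (a : ℕ) / Nat.gcd a b ≤ p - 1) (hb : (b : ℕ) / Nat.gcd a b ≤ p - 1) :
    ((a:ℕ) / p ^ (a:ℕ).factorization p) % p ≠ ((b:ℕ) / p ^ (b:ℕ).factorization p) % p := by
  have hp2 : 2 ≤ p := hp.two_le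
  set g := Nat.gcd (a:ℕ) (b:ℕ) with hgdef
  have hg0 : 0 < g := Nat.gcd_pos_of_pos_left _ a.pos
  obtain ⟨a', ha'⟩ := (Nat.gcd_dvd_left (a:ℕ) (b:ℕ) : g ∣ (a:ℕ))
  obtain ⟨b', hb'⟩ := (Nat.gcd_dvd_right (a:ℕ) (b:ℕ) : g ∣ (b:ℕ))
  have ha'v : (a:ℕ) / g = a' := by rw [ha']; exact Nat.mul_div_cancel_left _ hg0
  have hb'v : (b:ℕ) / g = b' := by rw [hb']; exact Nat.mul_div_cancel_left _ hg0
  have ha'0 : 0 < a' := by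
    rcases Nat.eq_zero_or_pos a' with h | h
    · exfalso; have := a.pos; rw [h, Nat.mul_zero] at ha'; omega
    · exact h
  have hb'0 : 0 < b' := by
    rcases Nat.eq_zero_or_pos b' with h | h
    · exfalso; have := b.pos; rw [h, Nat.mul_zero] at hb'; omega
    · exact h
  have ha'p : a' < p := by rw [ha'v] at ha; omega
  have hb'p : b' < p := by rw [hb'v] at hb; omega
  have hpa' : ¬ p ∣ a' := fun h => absurd (Nat.le_of_dvd ha'0 h) (by omega)
  have hpb' : ¬ p ∣ b' := fun h => absurd (Nat.le_of_dvd hb'0 h) (by omega)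
  have hfa : (a:ℕ).factorization p = g.factorization p := by
    rw [ha', Nat.factorization_mul (by omega) (by omega)]
    simp [Nat.factorization_eq_zero_of_not_dvd hpa', hgdef]
  have hfb : (b:ℕ).factorization p = g.factorization p := by
    rw [hb', Nat.factorization_mul (by omega) (by omega)]
    simp [Nat.factorization_eq_zero_of_not_dvd hpb', hgdef]
  set e := g.factorization p with hedef
  have hpe : p ^ e ∣ g := Nat.ordProj_dvd g p
  set h := g / p ^ e with hhdef
  have hph : ¬ p ∣ h := Nat.not_dvd_ordCompl hp (by omega)
  have hca : (a:ℕ) / p ^ (a:ℕ).factorization p = h * a' := by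
    rw [hfa, ha', hhdef, Nat.mul_comm g a', Nat.mul_div_assoc a' hpe, Nat.mul_comm]
  have hcb : (b:ℕ) / p ^ (b:ℕ).factorization p = h * b' := by
    rw [hfb, hb', hhdef, Nat.mul_comm g b', Nat.mul_div_assoc b' hpe, Nat.mul_comm]
  rw [hca, hcb]
  intro heq
  have hmod : h * a' ≡ h * b' [MOD p] := heq
  have hcop : Nat.gcd p h = 1 := (hp.coprime_iff_not_dvd).mpr hph
  have hab' : a' ≡ b' [MOD p] := hmod.cancel_left_of_coprime hcop
  have : a' % p = b' % p := hab'
  rw [Nat.mod_eq_of_lt ha'p, Nat.mod_eq_of_lt hb'p] at this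
  subst this
  exact hab (PNat.coe_injective (ha'.trans hb'.symm))

/-- For every prime `p`, the arithmetic graph `B_{p-1}` has a proper coloring with
`p - 1` colors, and its chromatic number is exactly `p - 1`. -/
theorem arithGraph_chromatic_prime (p : ℕ) (hp : p.Prime) :
    (∃ c : ℕ+ → Fin (p - 1), ∀ a b : ℕ+, (arithGraph (p - 1)).Adj a b → c a ≠ c b) ∧
    (arithGraph (p - 1)).chromaticNumber = (p - 1 : ℕ) := by
  have hp2 : 2 ≤ p := hp.two_le
  have hbound : ∀ n : ℕ+, ((n:ℕ) / p ^ (n:ℕ).factorization p) % p - 1 < p - 1 := by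
    intro n
    have h1 : 0 < ((n:ℕ) / p ^ (n:ℕ).factorization p) := Nat.ordCompl_pos p (by exact_mod_cast n.pos.ne')
    have h2 : ¬ p ∣ ((n:ℕ) / p ^ (n:ℕ).factorization p) := Nat.not_dvd_ordCompl hp (by exact_mod_cast n.pos.ne')
    have h3 : ((n:ℕ) / p ^ (n:ℕ).factorization p) % p ≠ 0 := fun h => h2 (Nat.dvd_of_mod_eq_zero h)
    have h4 : ((n:ℕ) / p ^ (n:ℕ).factorization p) % p < p := Nat.mod_lt _ (by omega)
    omega
  set c : ℕ+ → Fin (p - 1) := fun n => ⟨((n:ℕ) / p ^ (n:ℕ).factorization p) % p - 1, hbound n⟩ with hc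
  have hproper : ∀ a b : ℕ+, (arithGraph (p - 1)).Adj a b → c a ≠ c b := by
    rintro a b ⟨hab, ha, hb⟩ heq
    have key := arith_key p hp a b hab ha hb
    have h3 : ∀ n : ℕ+, ((n:ℕ) / p ^ (n:ℕ).factorization p) % p ≠ 0 := fun n h =>
      Nat.not_dvd_ordCompl hp (by exact_mod_cast n.pos.ne') (Nat.dvd_of_mod_eq_zero h)
    have := Fin.mk.injEq _ _ _ _ ▸ heq
    simp only [hc, Fin.mk.injEq] at heq
    have := h3 a; have := h3 b
    omega
  refine ⟨⟨c, hproper⟩, ?_⟩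
  apply le_antisymm
  · exact (SimpleGraph.Colorable.chromaticNumber_le ⟨SimpleGraph.Coloring.mk c (fun hadj => hproper _ _ hadj)⟩)
  · have hclique : (arithGraph (p-1)).IsClique
        ((Finset.range (p-1)).map ⟨Nat.succPNat, Nat.succPNat_injective⟩ : Finset ℕ+) := by
      intro x hx y hy hxy
      simp only [Finset.coe_map, Set.mem_image, Finset.mem_coe, Finset.mem_range,
        Function.Embedding.coeFn_mk] at hx hy
      obtain ⟨i, hi, rfl⟩ := hx
      obtain ⟨j, hj, rfl⟩ := hy
      refine ⟨hxy, ?_, ?_⟩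
      · exact le_trans (Nat.div_le_self _ _) (by simp [Nat.succPNat]; omega)
      · exact le_trans (Nat.div_le_self _ _) (by simp [Nat.succPNat]; omega)
    have := hclique.card_le_chromaticNumber
    simpa using this
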